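/- Let s = (s_n) be an essentially increasing weight such that w = (s_n/n) is essentially decreasing. Then s has the lower regularity property (there exist C > 1 and an integer r ≥ 2 with s_{rn} ≥ C s_n for all n) if and only if w is regular (i.e., sup_n (1/(n w_n)) ∑_{j=1}^n w_j < ∞). -/

import Mathlib

set_option maxHeartbeats 1000000


open Finset

/-- Let `s` be an essentially increasing weight such that `w n = s n / n` is essentially
decreasing.  Then `s` has the lower regularity property (`∃ C > 1` and an integer
`r ≥ 2` with `s (r n) ≥ C * s n` for all `n`) if and only if `w` is regular
(`sup_n (1/(n * w n)) ∑_{j=1}^n w j < ∞`).  Indices start at `1`. -/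
theorem lrp_iff_regular (s : ℕ → ℝ) (hpos : ∀ n, 1 ≤ n → 0 < s n)
    (hessinc : ∃ K : ℝ, ∀ m n, 1 ≤ m → m ≤ n → s m / s n ≤ K)
    (hessdec : ∃ c : ℝ, 0 < c ∧
      ∀ m n, 1 ≤ m → m ≤ n → c ≤ (s m / m) / (s n / n)) :
    (∃ C : ℝ, 1 < C ∧ ∃ r : ℕ, 2 ≤ r ∧ ∀ n, 1 ≤ n → C * s n ≤ s (r * n)) ↔
    (∃ K : ℝ, ∀ n : ℕ, 1 ≤ n →
      (1 / ((n : ℝ) * (s n / n))) * ∑ j ∈ Finset.Icc 1 n, s j / j ≤ K) := by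
  obtain ⟨K₁, hK₁⟩ := hessinc
  obtain ⟨c, hc0, hcle⟩ := hessdec
  have hs1 := hpos 1 le_rfl
  have hK₁1 : 1 ≤ K₁ := by
    have h := hK₁ 1 1 le_rfl le_rfl
    rwa [div_self (ne_of_gt hs1)] at h
  have hK₁0 : (0:ℝ) < K₁ := lt_of_lt_of_le one_pos hK₁1
  have hinc : ∀ m n, 1 ≤ m → m ≤ n → s m ≤ K₁ * s n := by
    intro m n hm hmn
    exact (div_le_iff₀ (hpos n (hm.trans hmn))).mp (hK₁ m n hm hmn)
  have hcast : ∀ n : ℕ, 1 ≤ n → ((n:ℝ) * (s n / n)) = s n := by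
    intro n hn
    have hn0 : (n:ℝ) ≠ 0 := Nat.cast_ne_zero.mpr (by omega)
    field_simp
  constructor
  · rintro ⟨C, hC1, r, hr2, hlrp⟩
    have hC0 : (0:ℝ) < C := lt_trans one_pos hC1
    have haux : ∀ t n, 1 ≤ n → C ^ t * s n ≤ s (r ^ t * n) := by
      intro t
      induction t with
      | zero => intro n hn; simp
      | succ t ih =>
        intro n hn
        have h1 : 1 ≤ r ^ t * n :=
          Nat.one_le_iff_ne_zero.mpr (Nat.mul_ne_zero (pow_ne_zero _ (by omega)) (by omega))
        have h2 := hlrp (r ^ t * n) h1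
        have h3 := ih n hn
        have hCp : (0:ℝ) ≤ C ^ t * s n := mul_nonneg (pow_nonneg hC0.le t) (hpos n hn).le
        calc C ^ (t+1) * s n = C * (C ^ t * s n) := by ring
        _ ≤ C * s (r ^ t * n) := by nlinarith
        _ ≤ s (r * (r ^ t * n)) := h2
        _ = s (r ^ (t+1) * n) := by rw [show r * (r ^ t * n) = r ^ (t+1) * n by ring]
    obtain ⟨t₀, ht₀⟩ := pow_unbounded_of_one_lt K₁ hC1
    set t := max t₀ 1 with htdef
    have ht1 : 1 ≤ t := le_max_right _ _
    have htK : K₁ < C ^ t := lt_of_lt_of_le ht₀ (pow_le_pow_right₀ hC1.le (le_max_left _ _))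
    set R := r ^ t with hRdef
    set C' := C ^ t with hC'def
    have hC'0 : (0:ℝ) < C' := by rw [hC'def]; exact pow_pos hC0 t
    have hR2 : 2 ≤ R := by
      rw [hRdef]
      exact le_trans hr2 (Nat.le_self_pow (Nat.one_le_iff_ne_zero.mp ht1) r)
    have hboost : ∀ n, 1 ≤ n → C' * s n ≤ s (R * n) := by
      intro n hn; rw [hRdef, hC'def]; exact haux t n hn
    clear_value R C'
    have hR0 : (0:ℝ) < (R:ℝ) := by exact_mod_cast (by omega : 0 < R)
    have hratio : (0:ℝ) < 1 - K₁ / C' := by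
      have : K₁ / C' < 1 := (div_lt_one hC'0).mpr htK
      linarith
    have hratio1 : K₁ / C' > 0 := div_pos hK₁0 hC'0
    set M := K₁ * (R:ℝ) / (1 - K₁ / C') with hMdef
    have hM0 : 0 < M := div_pos (mul_pos hK₁0 hR0) hratio
    have hKRM : K₁ * (R:ℝ) ≤ M := by
      rw [hMdef, le_div_iff₀ hratio]
      nlinarith [mul_pos (mul_pos hK₁0 hR0) hratio1]
    clear_value M
    have key : ∀ n, 1 ≤ n → ∑ j ∈ Icc 1 n, s j / j ≤ M * s n := by
      intro n
      induction n using Nat.strong_induction_on with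
      | _ n ih =>
        intro hn
        have hsn := hpos n hn
        have hR0' : 0 < R := by omega
        set m := n / R with hmdef
        have hmn : m < n := by
          rw [hmdef]; exact Nat.div_lt_self (by omega) (Nat.lt_of_lt_of_le one_lt_two hR2)
        have hnmR : n < R * (m + 1) := by rw [hmdef]; exact Nat.lt_mul_div_succ n hR0'
        have hRm : R * m ≤ n := by rw [hmdef, mul_comm]; exact Nat.div_mul_le_self n R
        clear_value m
        have hbound : ∀ j ∈ Ioc m n, s j / j ≤ K₁ * s n / ((m:ℝ) + 1) := by
          intro j hj
          obtain ⟨hj1, hj2⟩ := Finset.mem_Ioc.mp hj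
          have hj1' : 1 ≤ j := le_trans (Nat.succ_le_succ (Nat.zero_le m)) hj1
          have hsj : 0 < s j := hpos j hj1'
          have h1 : s j ≤ K₁ * s n := hinc j n hj1' hj2
          have h2 : ((m:ℝ) + 1) ≤ (j:ℝ) := by exact_mod_cast hj1
          exact div_le_div₀ (by positivity) h1 (by positivity) h2
        have hsum_block : ∑ j ∈ Ioc m n, s j / j ≤ ((n:ℝ) - (m:ℝ)) * (K₁ * s n / ((m:ℝ)+1)) := by
          have h := Finset.sum_le_card_nsmul (Ioc m n) (fun j => s j / (j:ℝ)) _ hbound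
          rw [Nat.card_Ioc, nsmul_eq_mul, Nat.cast_sub hmn.le] at h
          exact h
        have hnm : (n:ℝ) - (m:ℝ) ≤ ((m:ℝ)+1) * R := by
          have h' : (n:ℝ) < (R:ℝ) * ((m:ℝ)+1) := by exact_mod_cast hnmR
          have hm0 : (0:ℝ) ≤ (m:ℝ) := Nat.cast_nonneg m
          linarith
        have hblock2 : ∑ j ∈ Ioc m n, s j / j ≤ K₁ * R * s n := by
          have hnn : (0:ℝ) ≤ K₁ * s n / ((m:ℝ)+1) :=
            div_nonneg (mul_nonneg hK₁0.le hsn.le) (by positivity)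
          have hm1 : ((m:ℝ)+1) ≠ 0 := by positivity
          calc ∑ j ∈ Ioc m n, s j / j ≤ ((n:ℝ) - (m:ℝ)) * (K₁ * s n / ((m:ℝ)+1)) := hsum_block
          _ ≤ ((m:ℝ)+1) * R * (K₁ * s n / ((m:ℝ)+1)) := mul_le_mul_of_nonneg_right hnm hnn
          _ = K₁ * R * s n := by field_simp
        rcases Nat.eq_zero_or_pos m with hm0 | hm0
        · have hset : Icc 1 n = Ioc m n := by rw [hm0]; exact Finset.Icc_add_one_left_eq_Ioc 0 n
          rw [hset]
          calc ∑ j ∈ Ioc m n, s j / j ≤ K₁ * R * s n := hblock2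
          _ ≤ M * s n := mul_le_mul_of_nonneg_right hKRM hsn.le
        · have hm1 : 1 ≤ m := hm0
          have hsm := hpos m hm1
          have hsplit : ∑ j ∈ Icc 1 m, s j / j + ∑ j ∈ Ioc m n, s j / j
              = ∑ j ∈ Icc 1 n, s j / j := by
            rw [show Icc 1 m = Ioc 0 m from Finset.Icc_add_one_left_eq_Ioc 0 m,
              show Icc 1 n = Ioc 0 n from Finset.Icc_add_one_left_eq_Ioc 0 n]
            exact Finset.sum_Ioc_consecutive _ (Nat.zero_le m) hmn.le
          have hIH := ih m hmn hm1
          have hRm1 : 1 ≤ R * m :=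
            Nat.one_le_iff_ne_zero.mpr
              (Nat.mul_ne_zero (by omega) (Nat.one_le_iff_ne_zero.mp hm1))
          have h1 : C' * s m ≤ s (R * m) := hboost m hm1
          have h2 : s (R * m) ≤ K₁ * s n := hinc (R*m) n hRm1 hRm
          have hsm_le : s m ≤ K₁ / C' * s n := by
            rw [div_mul_eq_mul_div, le_div_iff₀ hC'0]
            nlinarith
          have hfinal : M * (K₁ / C') + K₁ * R = M := by
            have hne : (1 - K₁/C') ≠ 0 := ne_of_gt hratio
            have h : M * (1 - K₁/C') = K₁ * (R:ℝ) := by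
              rw [hMdef]; exact div_mul_cancel₀ _ hne
            linear_combination -h
          calc ∑ j ∈ Icc 1 n, s j / j
              = ∑ j ∈ Icc 1 m, s j / j + ∑ j ∈ Ioc m n, s j / j := hsplit.symm
          _ ≤ M * s m + K₁ * R * s n := add_le_add hIH hblock2
          _ ≤ M * (K₁ / C' * s n) + K₁ * R * s n := by nlinarith
          _ = (M * (K₁/C') + K₁ * (R:ℝ)) * s n := by ring
          _ = M * s n := by rw [hfinal]
    refine ⟨M, fun n hn => ?_⟩
    rw [hcast n hn, one_div_mul_eq_div, div_le_iff₀ (hpos n hn)]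
    exact key n hn
  · rintro ⟨K, hK⟩
    have hA : ∀ n, 1 ≤ n → ∑ j ∈ Icc 1 n, s j / j ≤ K * s n := by
      intro n hn
      have h := hK n hn
      rwa [hcast n hn, one_div_mul_eq_div, div_le_iff₀ (hpos n hn)] at h
    have hK1 : 1 ≤ K := by
      have h := hA 1 le_rfl
      rw [Finset.Icc_self, Finset.sum_singleton] at h
      norm_num at h
      nlinarith
    have hK0 : (0:ℝ) < K := lt_of_lt_of_le one_pos hK1
    have hc1 : c ≤ 1 := by
      have h := hcle 1 1 le_rfl le_rfl
      simp only [Nat.cast_one, div_one] at h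
      rwa [div_self (ne_of_gt hs1)] at h
    have hwlow : ∀ m n, 1 ≤ m → m ≤ n → c * (s n / n) ≤ s m / m := by
      intro m n hm hmn
      have hn1 : 1 ≤ n := hm.trans hmn
      have hn0 : (0:ℝ) < (n:ℝ) := by exact_mod_cast hn1
      have hw : 0 < s n / (n:ℝ) := div_pos (hpos n hn1) hn0
      exact (le_div_iff₀ hw).mp (hcle m n hm hmn)
    have hAlow : ∀ n, 1 ≤ n → c * s n ≤ ∑ j ∈ Icc 1 n, s j / j := by
      intro n hn
      have hn0 : (0:ℝ) < (n:ℝ) := by exact_mod_cast hn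
      have hb : ∀ j ∈ Icc 1 n, c * (s n / n) ≤ s j / j := by
        intro j hj
        obtain ⟨hj1, hj2⟩ := Finset.mem_Icc.mp hj
        exact hwlow j n hj1 hj2
      have h := Finset.card_nsmul_le_sum (Icc 1 n) (fun j => s j / (j:ℝ)) _ hb
      rw [Nat.card_Icc, nsmul_eq_mul] at h
      have hcard : ((n + 1 - 1 : ℕ):ℝ) = (n:ℝ) := by norm_num
      rw [hcard] at h
      calc c * s n = c * ((n:ℝ) * (s n / n)) := by rw [hcast n hn]
      _ = (n:ℝ) * (c * (s n / n)) := by ring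
      _ ≤ ∑ j ∈ Icc 1 n, s j / j := h
    have hKne : K ≠ 0 := ne_of_gt hK0
    set d := c / (2 * K) with hd
    clear_value d
    have hd0 : 0 < d := by rw [hd]; exact div_pos hc0 (by linarith)
    have hdlt : d < 1 := by
      rw [hd, div_lt_one (by linarith)]
      linarith
    have hdouble : ∀ n, 1 ≤ n →
        ∑ j ∈ Icc 1 n, s j / j ≤ (1 - d) * ∑ j ∈ Icc 1 (2*n), s j / j := by
      intro n hn
      have h2n : 1 ≤ 2 * n := by omega
      have hs2n := hpos (2*n) h2n
      have h2n0 : (0:ℝ) < ((2*n:ℕ):ℝ) := by exact_mod_cast h2n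
      have hsplit : ∑ j ∈ Icc 1 n, s j / j + ∑ j ∈ Ioc n (2*n), s j / j
          = ∑ j ∈ Icc 1 (2*n), s j / j := by
        rw [show Icc 1 n = Ioc 0 n from Finset.Icc_add_one_left_eq_Ioc 0 n,
          show Icc 1 (2*n) = Ioc 0 (2*n) from Finset.Icc_add_one_left_eq_Ioc 0 (2*n)]
        exact Finset.sum_Ioc_consecutive _ (Nat.zero_le n) (by omega)
      have hmid : c / 2 * s (2*n) ≤ ∑ j ∈ Ioc n (2*n), s j / j := by
        have hb : ∀ j ∈ Ioc n (2*n), c * (s (2*n) / ((2*n:ℕ):ℝ)) ≤ s j / j := by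
          intro j hj
          obtain ⟨hj1, hj2⟩ := Finset.mem_Ioc.mp hj
          exact hwlow j (2*n) (by omega) hj2
        have h := Finset.card_nsmul_le_sum (Ioc n (2*n)) (fun j => s j / (j:ℝ)) _ hb
        rw [Nat.card_Ioc, nsmul_eq_mul] at h
        have hcard2 : 2*n - n = n := by omega
        rw [hcard2] at h
        have h2n' : ((2*n:ℕ):ℝ) * (s (2*n) / ((2*n:ℕ):ℝ)) = s (2*n) := hcast (2*n) h2n
        have heq : (n:ℝ) * (c * (s (2*n) / ((2*n:ℕ):ℝ))) = c / 2 * s (2*n) := by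
          have hn0 : (n:ℝ) ≠ 0 := Nat.cast_ne_zero.mpr (by omega)
          rw [← h2n']
          push_cast
          field_simp
        rwa [heq] at h
      have hupper := hA (2*n) h2n
      have hdK : d * (K * s (2*n)) = c / 2 * s (2*n) := by
        rw [hd]; field_simp
      have hstep : d * ∑ j ∈ Icc 1 (2*n), s j / j ≤ c / 2 * s (2*n) := by
        calc d * ∑ j ∈ Icc 1 (2*n), s j / j ≤ d * (K * s (2*n)) :=
          mul_le_mul_of_nonneg_left hupper hd0.le
        _ = c / 2 * s (2*n) := hdK
      linarith
    have hiter : ∀ k n, 1 ≤ n →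
        ∑ j ∈ Icc 1 n, s j / j ≤ (1-d)^k * ∑ j ∈ Icc 1 (2^k * n), s j / j := by
      intro k
      induction k with
      | zero => intro n hn; simp
      | succ k ih =>
        intro n hn
        have h1 := ih n hn
        have hk1 : 1 ≤ 2^k * n :=
          Nat.one_le_iff_ne_zero.mpr (Nat.mul_ne_zero (pow_ne_zero _ (by omega)) (by omega))
        have h2 := hdouble (2^k * n) hk1
        have hnn : (0:ℝ) ≤ (1-d)^k := pow_nonneg (by linarith) k
        calc ∑ j ∈ Icc 1 n, s j / j ≤ (1-d)^k * ∑ j ∈ Icc 1 (2^k * n), s j / j := h1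
        _ ≤ (1-d)^k * ((1-d) * ∑ j ∈ Icc 1 (2*(2^k * n)), s j / j) :=
            mul_le_mul_of_nonneg_left h2 hnn
        _ = (1-d)^(k+1) * ∑ j ∈ Icc 1 (2^(k+1) * n), s j / j := by
            rw [show 2*(2^k*n) = 2^(k+1)*n by ring]; ring
    obtain ⟨k₀, hk₀⟩ := exists_pow_lt_of_lt_one hd0 (show 1 - d < 1 by linarith)
    set k := max k₀ 1 with hkdef
    have hk : (1-d)^k ≤ d :=
      le_trans (pow_le_pow_of_le_one (by linarith) (by linarith) (le_max_left _ _)) hk₀.le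
    refine ⟨2, one_lt_two, 2^k, ?_, ?_⟩
    · have : k ≠ 0 := by
        have := le_max_right k₀ 1; omega
      calc 2 = 2^1 := rfl
      _ ≤ 2^k := Nat.pow_le_pow_right (by omega) (by omega)
    · intro n hn
      have hkn1 : 1 ≤ 2^k * n :=
        Nat.one_le_iff_ne_zero.mpr (Nat.mul_ne_zero (pow_ne_zero _ (by omega)) (by omega))
      have h1 := hAlow n hn
      have h2 := hiter k n hn
      have h3 := hA (2^k * n) hkn1
      have hApos : 0 ≤ ∑ j ∈ Icc 1 (2^k*n), s j / j := by
        have := hAlow (2^k*n) hkn1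
        nlinarith [hpos (2^k*n) hkn1]
      have h4 : (1-d)^k * ∑ j ∈ Icc 1 (2^k*n), s j / j ≤ d * ∑ j ∈ Icc 1 (2^k*n), s j / j :=
        mul_le_mul_of_nonneg_right hk hApos
      have h5 : d * ∑ j ∈ Icc 1 (2^k*n), s j / j ≤ d * (K * s (2^k*n)) :=
        mul_le_mul_of_nonneg_left h3 hd0.le
      have h6 : d * (K * s (2^k*n)) = c / 2 * s (2^k*n) := by
        rw [hd]; field_simp
      have h7 : c * s n ≤ c / 2 * s (2^k*n) := by linarith
      nlinarith [hpos (2^k*n) hkn1, hpos n hn]
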